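/- Let H be a real inner product space, r > 0 and 0 < κ ≤ 1. Let θ_0 ∈ H with ‖θ_0‖ ≤ r/κ + 2r and let (m_t)_{t≥0} be a sequence in H with, for every t, ‖m_t‖ ≤ 2r and ⟨θ_t, m_t⟩ ≥ κ·‖θ_t‖·‖m_t‖, where θ_{t+1} = θ_t − m_t. Then ‖θ_t‖ ≤ r/κ + 2r for every t ≥ 0. -/
import Mathlib

open scoped RealInnerProductSpace

/-- uniform boundedness of the herding state: under the angle
condition and `‖m_t‖ ≤ 2r`, the iterates `θ_{t+1} = θ_t - m_t` remain in the
ball of radius `r/κ + 2r`. -/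
theorem herding_state_bounded
    {H : Type*} [NormedAddCommGroup H] [InnerProductSpace ℝ H]
    (r κ : ℝ) (hr : 0 < r) (hκ : 0 < κ) (hκ1 : κ ≤ 1)
    (θ m : ℕ → H)
    (hθ0 : ‖θ 0‖ ≤ r / κ + 2 * r)
    (hrec : ∀ t : ℕ, θ (t + 1) = θ t - m t)
    (hm : ∀ t : ℕ, ‖m t‖ ≤ 2 * r)
    (hangle : ∀ t : ℕ, κ * ‖θ t‖ * ‖m t‖ ≤ ⟪θ t, m t⟫) :
    ∀ t : ℕ, ‖θ t‖ ≤ r / κ + 2 * r := by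
  intro t
  induction t with
  | zero => exact hθ0
  | succ t ih =>
    by_cases hcase : ‖θ t‖ ≤ r / κ
    · calc ‖θ (t + 1)‖ = ‖θ t - m t‖ := by rw [hrec]
        _ ≤ ‖θ t‖ + ‖m t‖ := norm_sub_le _ _
        _ ≤ r / κ + 2 * r := add_le_add hcase (hm t)
    · push_neg at hcase
      have hθpos : 0 ≤ ‖θ t‖ := norm_nonneg _
      have hmn : 0 ≤ ‖m t‖ := norm_nonneg _
      have hrk : r < κ * ‖θ t‖ := by
        rw [div_lt_iff₀ hκ] at hcase; nlinarith
      have key : ‖θ (t + 1)‖ ^ 2 ≤ ‖θ t‖ ^ 2 := by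
        have hexp : ‖θ t - m t‖ ^ 2 = ‖θ t‖ ^ 2 - 2 * ⟪θ t, m t⟫ + ‖m t‖ ^ 2 :=
          norm_sub_sq_real _ _
        rw [hrec, hexp]
        nlinarith [hangle t, hm t]
      have hle : ‖θ (t + 1)‖ ≤ ‖θ t‖ := by
        nlinarith [norm_nonneg (θ (t + 1))]
      exact hle.trans ih
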